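/- Let T be a tree of even order. Then m(T) ≥ 1, and m(T) = 1 if and only if T has a perfect matching. -/

import Mathlib

namespace PaperMM

open SimpleGraph

/-- `M` is a matching of `G`: a set of edges of `G` that are pairwise disjoint. -/
def IsMatchingSet {V : Type} (G : SimpleGraph V) (M : Set (Sym2 V)) : Prop :=
  M ⊆ G.edgeSet ∧ M.Pairwise fun e f => ∀ v : V, ¬(v ∈ e ∧ v ∈ f)

/-- The matching number `μ(G)`: the maximum cardinality of a matching of `G`. -/
noncomputable def matchNum {V : Type} (G : SimpleGraph V) : ℕ :=
  sSup {n | ∃ M : Set (Sym2 V), IsMatchingSet G M ∧ M.ncard = n}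

/-- The set of maximum matchings of `G`. -/
def MaximumMatchings {V : Type} (G : SimpleGraph V) : Set (Set (Sym2 V)) :=
  {M | IsMatchingSet G M ∧ M.ncard = matchNum G}

/-- `m(G)`: the number of maximum matchings of `G`. -/
noncomputable def mm {V : Type} (G : SimpleGraph V) : ℕ := (MaximumMatchings G).ncard

/-- The matching `M` covers the vertex `v`. -/
def Covers {V : Type} (M : Set (Sym2 V)) (v : V) : Prop := ∃ e ∈ M, v ∈ e

/-- `v` is of type A in `G`: some maximum matching of `G` does not cover `v`. -/
def TypeA {V : Type} (G : SimpleGraph V) (v : V) : Prop :=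
  ∃ M ∈ MaximumMatchings G, ¬ Covers M v

/-- `v` is of type B in `G`: every maximum matching of `G` covers `v`. -/
def TypeB {V : Type} (G : SimpleGraph V) (v : V) : Prop := ¬ TypeA G v

/-- `G` has a perfect matching. -/
def HasPerfectMatching {V : Type} (G : SimpleGraph V) : Prop :=
  ∃ M : Set (Sym2 V), IsMatchingSet G M ∧ ∀ v, Covers M v

/-- The degree of `v` in `G`. -/
noncomputable def degS {V : Type} (G : SimpleGraph V) (v : V) : ℕ := (G.neighborSet v).ncard

/-- `G` is an optimal tree: a tree maximising `m` among all trees of the same order. -/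
def OptimalTree {V : Type} [Fintype V] (G : SimpleGraph V) : Prop :=
  G.IsTree ∧ ∀ H : SimpleGraph (Fin (Fintype.card V)), H.IsTree → mm H ≤ mm G

/-- The vertex set of the connected component of `s` in `G - st`. -/
def sideSet {V : Type} (G : SimpleGraph V) (s t : V) : Set V :=
  {v | (G.deleteEdges {s(s, t)}).Reachable s v}

/-- The connected component of `s` in `G - st`, as a graph. -/
def sideGraph {V : Type} (G : SimpleGraph V) (s t : V) :
    SimpleGraph (sideSet G s t) :=
  (G.deleteEdges {s(s, t)}).induce (sideSet G s t)

theorem mem_sideSet_self {V : Type} (G : SimpleGraph V) (s t : V) : s ∈ sideSet G s t :=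
  SimpleGraph.Reachable.refl s

/-- The root of the component of `s` in `G - st`, i.e. `s` itself. -/
def sideRoot {V : Type} (G : SimpleGraph V) (s t : V) : sideSet G s t :=
  ⟨s, mem_sideSet_self G s t⟩

/-- `μ(T_s)` where `T_s` is the component of `s` in `G - st`. -/
noncomputable def sideMu {V : Type} (G : SimpleGraph V) (s t : V) : ℕ := matchNum (sideGraph G s t)

/-- `m(T_s)` where `T_s` is the component of `s` in `G - st`. -/
noncomputable def sideM {V : Type} (G : SimpleGraph V) (s t : V) : ℕ := mm (sideGraph G s t)

/-- `μ(T_s − s)` where `T_s` is the component of `s` in `G - st`. -/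
noncomputable def sideMuDel {V : Type} (G : SimpleGraph V) (s t : V) : ℕ :=
  matchNum ((G.deleteEdges {s(s, t)}).induce (sideSet G s t \ {s}))

/-- `m(T_s − s)` where `T_s` is the component of `s` in `G - st`. -/
noncomputable def sideMDel {V : Type} (G : SimpleGraph V) (s t : V) : ℕ :=
  mm ((G.deleteEdges {s(s, t)}).induce (sideSet G s t \ {s}))

/-- A rooted graph: a vertex type, a graph on it, and a root vertex. -/
structure RGraph : Type 1 where
  V : Type
  G : SimpleGraph V
  root : V

/-- `m(T)` for a rooted graph. -/
noncomputable def RGraph.m (T : RGraph) : ℕ := mm T.G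

/-- `m_0(T) = m(T − r)` for a rooted graph with root `r`. -/
noncomputable def RGraph.m0 (T : RGraph) : ℕ := mm (T.G.induce {v | v ≠ T.root})

/-- `m_1(T)`: the number of maximum matchings of `G` covering `r`. -/
noncomputable def mmCover {V : Type} (G : SimpleGraph V) (r : V) : ℕ :=
  {M | M ∈ MaximumMatchings G ∧ Covers M r}.ncard

/-- The order (number of vertices) of a rooted graph. -/
noncomputable def RGraph.order (T : RGraph) : ℕ := Nat.card T.V

/-- Isomorphism of rooted graphs: a graph isomorphism mapping root to root. -/
def RGraph.RIso (T T' : RGraph) : Prop :=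
  ∃ φ : T.G ≃g T'.G, φ T.root = T'.root

/-- The one-vertex rooted tree `L`. -/
def rL : RGraph := ⟨PUnit, ⊥, PUnit.unit⟩

/-- The fork `F`: the root `0` is adjacent to `1`, which is adjacent to the leaves `2`, `3`. -/
def rF : RGraph :=
  ⟨Fin 4, SimpleGraph.fromRel (fun a b => (a = 0 ∧ b = 1) ∨ (a = 1 ∧ b = 2) ∨ (a = 1 ∧ b = 3)), 0⟩

/-- The rooted tree `B₂*`: a single edge rooted at one endpoint. -/
def rB2 : RGraph := ⟨Fin 2, SimpleGraph.fromRel (fun a b => a = 0 ∧ b = 1), 0⟩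

/-- The rooted tree `A₃*`: a path on three vertices rooted at an endpoint. -/
def rA3 : RGraph :=
  ⟨Fin 3, SimpleGraph.fromRel (fun a b => (a = 0 ∧ b = 1) ∨ (a = 1 ∧ b = 2)), 0⟩

/-- The `k`-claw: the star `K_{1,k}` rooted at its center. -/
def claw (k : ℕ) : RGraph :=
  ⟨Fin (k + 1), SimpleGraph.fromRel (fun a b => a = 0 ∧ b ≠ 0), 0⟩

/-- The chain construction `C`: seven new vertices are added to the rooted tree `T`;
`Sum.inr 0` is the new root `s`, `Sum.inr 1` is the vertex `b` adjacent to `s`, to the new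
leaf `Sum.inr 2`, to the root `Sum.inr 3` of a new fork (with center `Sum.inr 4` and leaves
`Sum.inr 5`, `Sum.inr 6`), and to the old root of `T`. -/
def consC (T : RGraph) : RGraph where
  V := T.V ⊕ Fin 7
  G := SimpleGraph.fromRel (fun a b =>
    (∃ x y, T.G.Adj x y ∧ a = Sum.inl x ∧ b = Sum.inl y) ∨
    (a = Sum.inr 0 ∧ b = Sum.inr 1) ∨
    (a = Sum.inr 1 ∧ b = Sum.inr 2) ∨
    (a = Sum.inr 1 ∧ b = Sum.inr 3) ∨
    (a = Sum.inr 3 ∧ b = Sum.inr 4) ∨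
    (a = Sum.inr 4 ∧ b = Sum.inr 5) ∨
    (a = Sum.inr 4 ∧ b = Sum.inr 6) ∨
    (a = Sum.inr 1 ∧ b = Sum.inl T.root))
  root := Sum.inr 0

/-- `hang T S`: the disjoint union of rooted graphs `T` and `S` together with an edge
joining their roots; the root of the result is the root of `T`. -/
def hang (T S : RGraph) : RGraph where
  V := T.V ⊕ S.V
  G := SimpleGraph.fromRel (fun a b =>
    (∃ x y, T.G.Adj x y ∧ a = Sum.inl x ∧ b = Sum.inl y) ∨
    (∃ x y, S.G.Adj x y ∧ a = Sum.inr x ∧ b = Sum.inr y) ∨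
    (a = Sum.inl T.root ∧ b = Sum.inr S.root))
  root := Sum.inl T.root

/-- The rooted subtree of `G` cut off by the edge `st` on the side of `s`, rooted at `s`. -/
def sideRG {V : Type} (G : SimpleGraph V) (s t : V) : RGraph :=
  ⟨sideSet G s t, sideGraph G s t, sideRoot G s t⟩

/-- `y` lies on the path from `x` to the root of `T`. -/
def OnRootPath (T : RGraph) (x y : T.V) : Prop := ∀ p : T.G.Walk x T.root, y ∈ p.support

/-- The rooted graph `T` contains a `k`-claw: either `T` itself is a `k`-claw, or
there is an edge `xy` of `T` with `y` on the path from `x` to the root such that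
the component of `x` in `T − xy`, rooted at `x`, is a `k`-claw. -/
def ContainsClaw (T : RGraph) (k : ℕ) : Prop :=
  T.RIso (claw k) ∨
  ∃ x y : T.V, T.G.Adj x y ∧ OnRootPath T x y ∧ (sideRG T.G x y).RIso (claw k)

/-- The vertex set of the branch of the rooted graph `(G, r)` containing the
neighbour `x` of `r`: all vertices reachable from `x` avoiding `r`. -/
def branchSet {V : Type} (G : SimpleGraph V) (r x : V) : Set V :=
  {v | ∃ p : G.Walk x v, r ∉ p.support}

/-- `m` of the branch of `(G, r)` at the neighbour `x`. -/
noncomputable def branchM {V : Type} (G : SimpleGraph V) (r x : V) : ℕ :=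
  mm (G.induce (branchSet G r x))

/-- `m_0` of the branch of `(G, r)` at the neighbour `x` (the branch is rooted at `x`). -/
noncomputable def branchM0 {V : Type} (G : SimpleGraph V) (r x : V) : ℕ :=
  mm (G.induce (branchSet G r x \ {x}))

/-- The branch of `(G, r)` at the neighbour `x`, rooted at `x`, is of type A. -/
def BranchTypeA {V : Type} (G : SimpleGraph V) (r x : V) : Prop :=
  ∃ h : x ∈ branchSet G r x, TypeA (G.induce (branchSet G r x)) ⟨x, h⟩

/-- The branch of `(G, r)` at the neighbour `x`, rooted at `x`, is of type B. -/
def BranchTypeB {V : Type} (G : SimpleGraph V) (r x : V) : Prop :=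
  ∃ h : x ∈ branchSet G r x, TypeB (G.induce (branchSet G r x)) ⟨x, h⟩

/-- The bipartition condition for rooted trees: a one-vertex rooted tree fulfils it,
and a rooted tree fulfils it if all of its branches (each rooted at the corresponding
neighbour of the root) fulfil it and have type different from the type of the root. -/
inductive BipCond : {V : Type} → SimpleGraph V → V → Prop where
  | single {V : Type} (G : SimpleGraph V) (r : V) (h : ∀ v : V, v = r) : BipCond G r
  | node {V : Type} (G : SimpleGraph V) (r : V)
      (hrec : ∀ (x : V), G.Adj r x → ∀ (hm : x ∈ branchSet G r x),
        BipCond (G.induce (branchSet G r x)) ⟨x, hm⟩)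
      (htype : ∀ (x : V), G.Adj r x → ∀ (hm : x ∈ branchSet G r x),
        ¬ (TypeA G r ↔ TypeA (G.induce (branchSet G r x)) ⟨x, hm⟩)) :
      BipCond G r

/-- The integer sequence `G_j` with `G_0 = 0`, `G_1 = 1`, `G_{j+2} = 11 G_{j+1} − 9 G_j`. -/
def Gseq : ℕ → ℤ
  | 0 => 0
  | 1 => 1
  | (n + 2) => 11 * Gseq (n + 1) - 9 * Gseq n

/-- Attach one new pendant vertex to the vertex `w` of `H`. -/
def addLeaf {W : Type} (H : SimpleGraph W) (w : W) : SimpleGraph (W ⊕ Unit) :=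
  SimpleGraph.fromRel (fun a b =>
    (∃ x y, H.Adj x y ∧ a = Sum.inl x ∧ b = Sum.inl y) ∨
    (a = Sum.inl w ∧ b = Sum.inr ()))

/-- The 6-vertex spider with legs of lengths 1, 1 and 3 attached to the center `0`. -/
def spider6 : SimpleGraph (Fin 6) :=
  SimpleGraph.fromRel (fun a b =>
    (a = 0 ∧ b = 1) ∨ (a = 0 ∧ b = 2) ∨ (a = 0 ∧ b = 3) ∨ (a = 3 ∧ b = 4) ∨ (a = 4 ∧ b = 5))



section Aux0

open Classical

variable {V : Type} [Fintype V]

lemma matchingSet_nonempty (G : SimpleGraph V) :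
    {n | ∃ M : Set (Sym2 V), IsMatchingSet G M ∧ M.ncard = n}.Nonempty :=
  ⟨0, ∅, ⟨Set.empty_subset _, Set.pairwise_empty _⟩, by simp⟩

lemma matchingSet_bdd (G : SimpleGraph V) :
    BddAbove {n | ∃ M : Set (Sym2 V), IsMatchingSet G M ∧ M.ncard = n} := by
  refine ⟨Nat.card (Sym2 V), ?_⟩
  rintro n ⟨M, _, rfl⟩
  calc M.ncard ≤ (Set.univ : Set (Sym2 V)).ncard :=
        Set.ncard_le_ncard (Set.subset_univ _) Set.finite_univ
    _ = Nat.card (Sym2 V) := Set.ncard_univ _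

lemma exists_maximumMatching (G : SimpleGraph V) : ∃ M, M ∈ MaximumMatchings G := by
  obtain ⟨M, hM, hc⟩ := Nat.sSup_mem (matchingSet_nonempty G) (matchingSet_bdd G)
  exact ⟨M, hM, hc⟩

lemma ncard_le_matchNum {G : SimpleGraph V} {M : Set (Sym2 V)} (h : IsMatchingSet G M) :
    M.ncard ≤ matchNum G :=
  le_csSup (matchingSet_bdd G) ⟨M, h, rfl⟩

lemma matchNum_mem (G : SimpleGraph V) :
    ∃ M : Set (Sym2 V), IsMatchingSet G M ∧ M.ncard = matchNum G :=
  Nat.sSup_mem (matchingSet_nonempty G) (matchingSet_bdd G)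

/-- the endpoints of an edge as a finset -/
noncomputable def endsF (e : Sym2 V) : Finset V := {x | x ∈ e}.toFinite.toFinset

lemma mem_endsF {e : Sym2 V} {v : V} : v ∈ endsF e ↔ v ∈ e := by
  simp [endsF]

lemma covered_ncard {G : SimpleGraph V} {M : Set (Sym2 V)} (h : IsMatchingSet G M) :
    {v | Covers M v}.ncard = 2 * M.ncard := by
  classical
  set Mf : Finset (Sym2 V) := M.toFinite.toFinset with hMf
  have hmemMf : ∀ e : Sym2 V, e ∈ Mf ↔ e ∈ M := fun e => Set.Finite.mem_toFinset _
  have hends : ∀ e ∈ M, (endsF e).card = 2 := by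
    intro e he
    have hedge : e ∈ G.edgeSet := h.1 he
    induction e using Sym2.ind with
    | _ a b =>
      have hab : a ≠ b := ((SimpleGraph.mem_edgeSet _).mp hedge).ne
      have : endsF s(a, b) = ({a, b} : Finset V) := by
        ext z; simp [mem_endsF, Sym2.mem_iff]
      rw [this, Finset.card_pair hab]
  have hdisj : ∀ e ∈ Mf, ∀ f ∈ Mf, e ≠ f → Disjoint (endsF e) (endsF f) := by
    intro e he f hf hne
    rw [Finset.disjoint_left]
    intro z hz1 hz2
    exact h.2 ((hmemMf e).mp he) ((hmemMf f).mp hf) hne z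
      ⟨mem_endsF.mp hz1, mem_endsF.mp hz2⟩
  have hkey : {v | Covers M v}.toFinite.toFinset = Mf.biUnion endsF := by
    ext z
    simp only [Set.Finite.mem_toFinset, Set.mem_setOf_eq, Finset.mem_biUnion]
    constructor
    · rintro ⟨e, he, hz⟩; exact ⟨e, (hmemMf e).mpr he, mem_endsF.mpr hz⟩
    · rintro ⟨e, he, hz⟩; exact ⟨e, (hmemMf e).mp he, mem_endsF.mp hz⟩
  have h1 : {v | Covers M v}.ncard = {v | Covers M v}.toFinite.toFinset.card :=
    Set.ncard_eq_toFinset_card _ _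
  have h2 : M.ncard = Mf.card := Set.ncard_eq_toFinset_card _ _
  rw [h1, hkey, Finset.card_biUnion hdisj, h2]
  have : ∀ e ∈ Mf, (endsF e).card = 2 := fun e he => hends e ((hmemMf e).mp he)
  rw [Finset.sum_congr rfl this, Finset.sum_const, smul_eq_mul]
  ring

lemma perfect_two_mul_ncard {G : SimpleGraph V} {M : Set (Sym2 V)}
    (h : IsMatchingSet G M) (hcov : ∀ v, Covers M v) :
    2 * M.ncard = Fintype.card V := by
  have huniv : {v | Covers M v} = Set.univ := Set.eq_univ_of_forall hcov
  rw [← covered_ncard h, huniv, Set.ncard_univ, Nat.card_eq_fintype_card]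

lemma two_mul_ncard_le {G : SimpleGraph V} {M : Set (Sym2 V)} (h : IsMatchingSet G M) :
    2 * M.ncard ≤ Fintype.card V := by
  rw [← covered_ncard h]
  calc {v | Covers M v}.ncard ≤ (Set.univ : Set V).ncard :=
        Set.ncard_le_ncard (Set.subset_univ _) Set.finite_univ
    _ = Fintype.card V := by rw [Set.ncard_univ, Nat.card_eq_fintype_card]

end Aux0

section AltWalk

/-- alternating sequence of partner functions -/
def altseq {V : Type} (F F' : V → V) (x : V) : ℕ → V
  | 0 => x
  | n + 1 => if Even n then F (altseq F F' x n) else F' (altseq F F' x n)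

/-- the walk along a sequence of adjacent vertices -/
def walkUpTo {V : Type} (G : SimpleGraph V) (v : ℕ → V)
    (hadj : ∀ n, G.Adj (v n) (v (n + 1))) (i : ℕ) :
    (k : ℕ) → G.Walk (v i) (v (i + k))
  | 0 => SimpleGraph.Walk.nil
  | k + 1 => (walkUpTo G v hadj i k).concat (hadj (i + k))

lemma walkUpTo_length {V : Type} (G : SimpleGraph V) (v : ℕ → V)
    (hadj : ∀ n, G.Adj (v n) (v (n + 1))) (i k : ℕ) :
    (walkUpTo G v hadj i k).length = k := by
  induction k with
  | zero => rfl
  | succ k ih => simp [walkUpTo, SimpleGraph.Walk.length_concat, ih]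

lemma walkUpTo_support {V : Type} (G : SimpleGraph V) (v : ℕ → V)
    (hadj : ∀ n, G.Adj (v n) (v (n + 1))) (i k : ℕ) :
    (walkUpTo G v hadj i k).support = (List.range (k + 1)).map (fun t => v (i + t)) := by
  induction k with
  | zero => simp [walkUpTo, List.range_succ]
  | succ k ih =>
    rw [show k + 1 + 1 = (k + 1) + 1 from rfl]
    simp only [walkUpTo, SimpleGraph.Walk.support_concat, ih, List.range_succ (n := k + 1),
      List.map_append, List.concat_eq_append]
    simp

lemma exists_partner {V : Type} {G : SimpleGraph V} {M : Set (Sym2 V)}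
    (hM : IsMatchingSet G M) (hcov : ∀ v, Covers M v) :
    ∃ F : V → V, (∀ v, s(v, F v) ∈ M) ∧ (∀ v w, s(v, w) ∈ M → F v = w) := by
  have hex : ∀ v : V, ∃ w, s(v, w) ∈ M := by
    intro v
    obtain ⟨e, he, hve⟩ := hcov v
    obtain ⟨w, rfl⟩ := (Sym2.mem_iff_exists).mp hve
    exact ⟨w, he⟩
  choose F hF using hex
  refine ⟨F, hF, ?_⟩
  intro v w hw
  by_contra hne
  have hedge_ne : s(v, F v) ≠ s(v, w) := fun h => hne (Sym2.congr_right.mp h)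
  exact hM.2 (hF v) hw hedge_ne v
    ⟨Sym2.mem_iff.mpr (Or.inl rfl), Sym2.mem_iff.mpr (Or.inl rfl)⟩

lemma pm_subset {V : Type} [Fintype V] {G : SimpleGraph V} (hac : G.IsAcyclic)
    {M M' : Set (Sym2 V)} (hM : IsMatchingSet G M) (hM' : IsMatchingSet G M')
    (hcov : ∀ v, Covers M v) (hcov' : ∀ v, Covers M' v) :
    ∀ e ∈ M, e ∈ M' := by
  classical
  obtain ⟨F, hF, hFu⟩ := exists_partner hM hcov
  obtain ⟨F', hF', hF'u⟩ := exists_partner hM' hcov'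
  intro e
  induction e using Sym2.ind with
  | _ x y =>
  intro hxy
  by_contra hxy'
  set v : ℕ → V := altseq F F' x with hv
  have hsucc : ∀ n, v (n + 1) = if Even n then F (v n) else F' (v n) := fun n => rfl
  have hmemE : ∀ n, Even n → s(v n, v (n + 1)) ∈ M := by
    intro n hn; rw [hsucc, if_pos hn]; exact hF (v n)
  have hmemO : ∀ n, ¬ Even n → s(v n, v (n + 1)) ∈ M' := by
    intro n hn; rw [hsucc, if_neg hn]; exact hF' (v n)
  have hv0 : v 0 = x := rfl
  have hFx : F x = y := hFu x y hxy
  have hC : ∀ n, (Even n → s(v n, v (n + 1)) ∉ M') ∧ (¬ Even n → s(v n, v (n + 1)) ∉ M) := by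
    intro n
    induction n with
    | zero =>
      constructor
      · intro _ hmem
        have : v 1 = y := by rw [hsucc, if_pos (Even.zero), hv0, hFx]
        rw [hv0, this] at hmem
        exact hxy' hmem
      · intro h; exact absurd Even.zero h
    | succ n ih =>
      by_cases hn : Even n
      · have hn1 : ¬ Even (n + 1) := by simp [Nat.even_add_one, hn]
        refine ⟨fun h => absurd h hn1, fun _ hmem => ?_⟩
        -- edge (n+1) ∈ M leads to contradiction
        have h1 : F (v (n + 1)) = v (n + 2) := hFu _ _ hmem
        have h2 : F (v (n + 1)) = v n := by
          apply hFu
          rw [Sym2.eq_swap]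
          exact hmemE n hn
        have h3 : v (n + 2) = v n := by rw [← h1, h2]
        have h4 : s(v (n + 1), v (n + 2)) ∈ M' := hmemO (n + 1) hn1
        rw [h3, Sym2.eq_swap] at h4
        exact (ih.1 hn) h4
      · have hn1 : Even (n + 1) := by simpa [Nat.even_add_one] using hn
        refine ⟨fun _ hmem => ?_, fun h => absurd hn1 h⟩
        have h1 : F' (v (n + 1)) = v (n + 2) := hF'u _ _ hmem
        have h2 : F' (v (n + 1)) = v n := by
          apply hF'u
          rw [Sym2.eq_swap]
          exact hmemO n hn
        have h3 : v (n + 2) = v n := by rw [← h1, h2]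
        have h4 : s(v (n + 1), v (n + 2)) ∈ M := hmemE (n + 1) hn1
        rw [h3, Sym2.eq_swap] at h4
        exact (ih.2 hn) h4
  have hadj : ∀ n, G.Adj (v n) (v (n + 1)) := by
    intro n
    by_cases hn : Even n
    · exact (SimpleGraph.mem_edgeSet _).mp (hM.1 (hmemE n hn))
    · exact (SimpleGraph.mem_edgeSet _).mp (hM'.1 (hmemO n hn))
  have hstepne : ∀ n, v (n + 1) ≠ v n := fun n => (hadj n).ne'
  have hback : ∀ n, v (n + 2) ≠ v n := by
    intro n heq
    by_cases hn : Even n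
    · have hn1 : ¬ Even (n + 1) := by simp [Nat.even_add_one, hn]
      have h4 : s(v (n + 1), v (n + 2)) ∈ M' := hmemO (n + 1) hn1
      rw [heq, Sym2.eq_swap] at h4
      exact (hC n).1 hn h4
    · have hn1 : Even (n + 1) := by simpa [Nat.even_add_one] using hn
      have h4 : s(v (n + 1), v (n + 2)) ∈ M := hmemE (n + 1) hn1
      rw [heq, Sym2.eq_swap] at h4
      exact (hC n).2 hn h4
  -- pigeonhole: a repetition exists
  have hrep : ∃ j, ∃ i, i < j ∧ v i = v j := by
    obtain ⟨a, b, hab, heq⟩ := Finite.exists_ne_map_eq_of_infinite v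
    rcases Nat.lt_or_ge a b with h | h
    · exact ⟨b, a, h, heq⟩
    · exact ⟨a, b, Nat.lt_of_le_of_ne h (fun hh => hab hh.symm), heq.symm⟩
  set j := Nat.find hrep with hj
  obtain ⟨i, hij, hveq⟩ := Nat.find_spec hrep
  have hmin : ∀ m, m < j → ¬ ∃ i, i < m ∧ v i = v m := fun m hm => Nat.find_min hrep hm
  have hinj : ∀ a b, a < b → b < j → v a ≠ v b := fun a b h1 h2 h3 => hmin b h2 ⟨a, h1, h3⟩
  have hne1 : i + 1 ≠ j := by
    intro h
    exact hstepne i (by rw [h, hveq])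
  have hne2 : i + 2 ≠ j := by
    intro h
    exact hback i (by rw [h, hveq])
  have h3le : i + 3 ≤ j := by omega
  obtain ⟨d, hd⟩ : ∃ d, j = i + (d + 2) + 1 := ⟨j - i - 3, by omega⟩
  set k := d + 2 with hk
  have hsupnodup : ((List.range (k + 1)).map (fun t => v (i + t))).Nodup := by
    refine List.Nodup.map_on ?_ List.nodup_range
    intro t1 ht1 t2 ht2 hteq
    by_contra htne
    have ht1' : t1 < k + 1 := List.mem_range.mp ht1
    have ht2' : t2 < k + 1 := List.mem_range.mp ht2
    rcases Nat.lt_or_ge t1 t2 with h | h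
    · exact hinj (i + t1) (i + t2) (by omega) (by omega) hteq
    · have : t2 < t1 := by omega
      exact hinj (i + t2) (i + t1) (by omega) (by omega) hteq.symm
  have hadj2 : G.Adj (v i) (v (i + k)) := by
    have h := hadj (i + k)
    have : i + k + 1 = j := by omega
    rw [this, ← hveq] at h
    exact h.symm
  have heqp := SimpleGraph.isAcyclic_iff_path_unique.mp hac
    ⟨walkUpTo G v hadj i k, (SimpleGraph.Walk.isPath_def _).mpr
      (by rw [walkUpTo_support]; exact hsupnodup)⟩
    (SimpleGraph.Path.singleton hadj2)
  have hlen : (walkUpTo G v hadj i k).length = 1 := by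
    have h := congrArg (fun p : G.Path (v i) (v (i + k)) => p.1.length) heqp
    simpa [SimpleGraph.Path.singleton] using h
  rw [walkUpTo_length] at hlen
  omega

lemma pm_unique {V : Type} [Fintype V] {G : SimpleGraph V} (hac : G.IsAcyclic)
    {M M' : Set (Sym2 V)} (hM : IsMatchingSet G M) (hM' : IsMatchingSet G M')
    (hcov : ∀ v, Covers M v) (hcov' : ∀ v, Covers M' v) : M = M' :=
  Set.Subset.antisymm (pm_subset hac hM hM' hcov hcov')
    (pm_subset hac hM' hM hcov' hcov)

end AltWalk

section Second

variable {V : Type} [Fintype V]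

lemma matching_symm :
    Symmetric (fun e f : Sym2 V => ∀ v : V, ¬(v ∈ e ∧ v ∈ f)) :=
  fun _ _ h z hz => h z ⟨hz.2, hz.1⟩

lemma exists_second {G : SimpleGraph V}
    (hconn : G.Connected) (h2 : 2 ≤ Fintype.card V)
    {M : Set (Sym2 V)} (hMm : M ∈ MaximumMatchings G) {u : V} (hu : ¬ Covers M u) :
    ∃ M₂ ∈ MaximumMatchings G, M₂ ≠ M := by
  classical
  obtain ⟨hM, hMn⟩ := hMm
  obtain ⟨w, hw⟩ := Fintype.exists_ne_of_one_lt_card (by omega) u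
  obtain ⟨x, hux⟩ : ∃ x, G.Adj u x := by
    obtain ⟨p⟩ := hconn.preconnected u w
    cases p with
    | nil => exact absurd rfl hw
    | cons h q => exact ⟨_, h⟩
  have hnmem : s(u, x) ∉ M := fun hmem => hu ⟨_, hmem, Sym2.mem_iff.mpr (Or.inl rfl)⟩
  have hx : Covers M x := by
    by_contra hx
    have hmatch : IsMatchingSet G (insert s(u, x) M) := by
      constructor
      · exact Set.insert_subset ((SimpleGraph.mem_edgeSet _).mpr hux) hM.1
      · haveI : Std.Symm (fun e f : Sym2 V => ∀ v : V, ¬(v ∈ e ∧ v ∈ f)) := ⟨fun _ _ h => matching_symm h⟩; rw [Set.pairwise_insert_of_symm]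
        refine ⟨hM.2, fun f hf _ z hz => ?_⟩
        rcases Sym2.mem_iff.mp hz.1 with rfl | rfl
        · exact hu ⟨f, hf, hz.2⟩
        · exact hx ⟨f, hf, hz.2⟩
    have hle := ncard_le_matchNum hmatch
    rw [Set.ncard_insert_of_notMem hnmem] at hle
    omega
  obtain ⟨e', he', hxe'⟩ := hx
  refine ⟨insert s(u, x) (M \ {e'}), ⟨⟨?_, ?_⟩, ?_⟩, ?_⟩
  · exact Set.insert_subset ((SimpleGraph.mem_edgeSet _).mpr hux)
      ((Set.diff_subset).trans hM.1)
  · haveI : Std.Symm (fun e f : Sym2 V => ∀ v : V, ¬(v ∈ e ∧ v ∈ f)) := ⟨fun _ _ h => matching_symm h⟩; rw [Set.pairwise_insert_of_symm]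
    refine ⟨hM.2.mono Set.diff_subset, fun f hf _ z hz => ?_⟩
    rcases Sym2.mem_iff.mp hz.1 with rfl | rfl
    · exact hu ⟨f, hf.1, hz.2⟩
    · exact hM.2 hf.1 he' (fun h => hf.2 (by simp [h])) z ⟨hz.2, hxe'⟩
  · have h1 : s(u, x) ∉ M \ {e'} := fun h => hnmem h.1
    rw [Set.ncard_insert_of_notMem h1, Set.ncard_diff_singleton_add_one he']
    exact hMn
  · intro heq
    apply hnmem
    rw [← heq]
    exact Set.mem_insert _ _

end Second

/-- for a tree of even order, `m(T) ≥ 1`, with `m(T) = 1` iff `T` has a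
perfect matching. -/
theorem stmt_0 {V : Type} [Fintype V] (G : SimpleGraph V)
    (htree : G.IsTree) (heven : Even (Fintype.card V)) :
    1 ≤ mm G ∧ (mm G = 1 ↔ HasPerfectMatching G) := by
  classical
  constructor
  · obtain ⟨M, hM⟩ := exists_maximumMatching G
    exact (Set.ncard_pos (Set.toFinite (MaximumMatchings G))).mpr ⟨M, hM⟩
  constructor
  · -- mm G = 1 → perfect matching
    intro h1
    obtain ⟨A, hA⟩ := Set.ncard_eq_one.mp h1
    obtain ⟨M, hM⟩ := exists_maximumMatching G
    have hMA : M = A := by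
      have := hA ▸ hM
      simpa using this
    subst hMA
    have hnonempty : Nonempty V := htree.isConnected.nonempty
    have h2 : 2 ≤ Fintype.card V := by
      have h0 : 0 < Fintype.card V := Fintype.card_pos
      rcases heven with ⟨k, hk⟩
      omega
    have hcov : ∀ v, Covers M v := by
      intro v
      by_contra hv
      obtain ⟨M₂, hM₂, hne⟩ := exists_second htree.isConnected h2 hM hv
      have : M₂ = M := by
        have := hA ▸ hM₂
        simpa using this
      exact hne this
    exact ⟨M, hM.1, hcov⟩
  · -- perfect matching → mm G = 1
    rintro ⟨M₀, hM₀, hcov₀⟩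
    have hmax : M₀.ncard = matchNum G := by
      refine le_antisymm (ncard_le_matchNum hM₀) ?_
      obtain ⟨M₁, hM₁, hn₁⟩ := matchNum_mem G
      rw [← hn₁]
      have h1 := two_mul_ncard_le hM₁
      have h2 := perfect_two_mul_ncard hM₀ hcov₀
      omega
    have hset : MaximumMatchings G = {M₀} := by
      ext M
      simp only [Set.mem_singleton_iff]
      constructor
      · rintro ⟨hM, hMn⟩
        have hncard : 2 * M.ncard = Fintype.card V := by
          have h2 := perfect_two_mul_ncard hM₀ hcov₀
          omega
        have hcovset : {v | Covers M v} = Set.univ := by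
          apply Set.eq_of_subset_of_ncard_le (Set.subset_univ _) _ Set.finite_univ
          rw [covered_ncard hM, Set.ncard_univ, Nat.card_eq_fintype_card]
          omega
        have hcov : ∀ v, Covers M v := fun v => by
          have : v ∈ {v | Covers M v} := by rw [hcovset]; trivial
          exact this
        exact pm_unique htree.IsAcyclic hM hM₀ hcov hcov₀
      · rintro rfl
        exact ⟨hM₀, hmax⟩
    rw [mm, hset, Set.ncard_singleton]

end PaperMM
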